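/- Let u : ℝ³ → ℝ be continuously differentiable, let q₀,…,q_N ∈ ℝ³ and t₁,…,t_N > 0 with Σ_{n=1}^N t_n = T, and let q : [0,T] → ℝ³ be the associated piecewise-linear trajectory. Suppose D > 0 satisfies ‖∇u(x)‖ ≤ D for every point x on any segment [q_{n−1}, q_n], and let E > 0 be a prescribed maximum tolerable approximation error. If ‖q_n − q_{n−1}‖ ≤ 2E/(D·T) for every n = 1,…,N, then |∫₀^T u(q(t)) dt − Σ_{n=1}^N t_n u(q_n)| ≤ E. -/

import Mathlib

open intervalIntegral MeasureTheory Set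

lemma seg_cont {u : EuclideanSpace ℝ (Fin 3) → ℝ} (hu : ContDiff ℝ 1 u)
    (x y : EuclideanSpace ℝ (Fin 3)) {a b τ : ℝ}
    {q : ℝ → EuclideanSpace ℝ (Fin 3)}
    (hq : ∀ t ∈ Set.Icc a b, q t = x + ((t - a) / τ) • (y - x)) :
    ContinuousOn (fun t => u (q t)) (Set.Icc a b) := by
  have h : ContinuousOn (fun t => u (x + ((t - a) / τ) • (y - x))) (Set.Icc a b) :=
    (hu.continuous.comp (by continuity)).continuousOn
  exact h.congr fun t ht => by rw [hq t ht]

lemma seg_est {u : EuclideanSpace ℝ (Fin 3) → ℝ} (hu : ContDiff ℝ 1 u)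
    (x y : EuclideanSpace ℝ (Fin 3)) {a b τ : ℝ} (hτ : 0 < τ) (hab : b = a + τ)
    {q : ℝ → EuclideanSpace ℝ (Fin 3)}
    (hq : ∀ t ∈ Set.Icc a b, q t = x + ((t - a) / τ) • (y - x))
    {D : ℝ} (hD : 0 ≤ D)
    (hgrad : ∀ s ∈ Set.Icc (0:ℝ) 1, ‖gradient u ((1 - s) • x + s • y)‖ ≤ D) :
    |(∫ t in a..b, u (q t)) - τ * u y| ≤ D * ‖y - x‖ * τ / 2 := by
  have hab' : a ≤ b := by linarith
  have hfb : ∀ z ∈ segment ℝ x y, ‖fderiv ℝ u z‖ ≤ D := by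
    intro z hz
    rw [segment_eq_image] at hz
    obtain ⟨s, hs, rfl⟩ := hz
    have h := hgrad s hs
    rwa [gradient, (InnerProductSpace.toDual ℝ _).symm.norm_map] at h
  have key : ∀ t ∈ Set.Icc a b, |u (q t) - u y| ≤ (D * ‖y - x‖ / τ) * (b - t) := by
    intro t ht
    have hs0 : 0 ≤ (t - a)/τ := div_nonneg (by linarith [ht.1]) hτ.le
    have hs1 : (t - a)/τ ≤ 1 := by rw [div_le_one hτ]; linarith [ht.2]
    have hqt : q t ∈ segment ℝ x y := by
      rw [hq t ht, segment_eq_image]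
      exact ⟨(t - a)/τ, ⟨hs0, hs1⟩, by module⟩
    have hlip := (convex_segment x y).norm_image_sub_le_of_norm_fderiv_le
      (fun z _ => (hu.differentiable one_ne_zero).differentiableAt) hfb hqt
      (right_mem_segment ℝ x y)
    have hc : (1 : ℝ) - (t - a)/τ = (b - t)/τ := by
      rw [hab]; field_simp; ring
    have hnorm : ‖y - q t‖ = ((b - t)/τ) * ‖y - x‖ := by
      rw [hq t ht, show y - (x + ((t - a)/τ) • (y - x)) = (1 - (t - a)/τ) • (y - x) by module,
        hc, norm_smul, Real.norm_eq_abs, abs_of_nonneg (by rw [← hc]; linarith)]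
    rw [abs_sub_comm, ← Real.norm_eq_abs]
    calc ‖u y - u (q t)‖ ≤ D * ‖y - q t‖ := hlip
      _ = (D * ‖y - x‖ / τ) * (b - t) := by rw [hnorm]; field_simp
  have hint : IntervalIntegrable (fun t => u (q t)) volume a b := by
    apply ContinuousOn.intervalIntegrable
    rw [Set.uIcc_of_le hab']; exact seg_cont hu x y hq
  have hgint : IntervalIntegrable (fun t => (D * ‖y - x‖ / τ) * (b - t)) volume a b :=
    ((continuous_const.mul (continuous_const.sub continuous_id)).intervalIntegrable a b)
  have hconst : (∫ _t in a..b, u y) = τ * u y := by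
    rw [intervalIntegral.integral_const, smul_eq_mul, hab]; ring
  have hg : (∫ t in a..b, (D * ‖y - x‖ / τ) * (b - t)) = D * ‖y - x‖ * τ / 2 := by
    rw [intervalIntegral.integral_const_mul,
      intervalIntegral.integral_sub intervalIntegrable_const intervalIntegrable_id]
    simp only [intervalIntegral.integral_const, integral_id, smul_eq_mul, hab]
    field_simp; ring
  have hae : ∀ᵐ t ∂(volume.restrict (Set.uIoc a b)),
      ‖u (q t) - u y‖ ≤ (D * ‖y - x‖ / τ) * (b - t) := by
    rw [Set.uIoc_of_le hab']
    refine (ae_restrict_iff' measurableSet_Ioc).mpr (ae_of_all _ fun t ht => ?_)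
    rw [Real.norm_eq_abs]
    exact key t ⟨ht.1.le, ht.2⟩
  calc |(∫ t in a..b, u (q t)) - τ * u y|
      = ‖∫ t in a..b, (u (q t) - u y)‖ := by
        rw [intervalIntegral.integral_sub hint intervalIntegrable_const, hconst,
          Real.norm_eq_abs]
    _ ≤ |∫ t in a..b, (D * ‖y - x‖ / τ) * (b - t)| :=
        intervalIntegral.norm_integral_le_abs_of_norm_le hae hgint
    _ = D * ‖y - x‖ * τ / 2 := by
        rw [hg, abs_of_nonneg (by positivity)]

/-- If the segment lengths of a piecewise-linear trajectory do
not exceed `2E/(D·T)`, where `D > 0` bounds the gradient norm of the utility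
`u` along all segments and `E > 0` is the prescribed maximum tolerable
approximation error, then the finite-sum approximation error is at most `E`. -/
theorem finite_sum_approximation_error_within_tolerance
    (u : EuclideanSpace ℝ (Fin 3) → ℝ) (hu : ContDiff ℝ 1 u)
    (N : ℕ) (hN : 1 ≤ N)
    (w : ℕ → EuclideanSpace ℝ (Fin 3)) (τ : ℕ → ℝ)
    (hτ : ∀ n, 1 ≤ n → n ≤ N → 0 < τ n)
    (T : ℝ) (hT : T = ∑ n ∈ Finset.Icc 1 N, τ n)
    (q : ℝ → EuclideanSpace ℝ (Fin 3))
    (hq : ∀ n, 1 ≤ n → n ≤ N →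
      ∀ t ∈ Set.Icc (∑ m ∈ Finset.Icc 1 (n - 1), τ m) (∑ m ∈ Finset.Icc 1 n, τ m),
        q t = w (n - 1) +
          ((t - ∑ m ∈ Finset.Icc 1 (n - 1), τ m) / τ n) • (w n - w (n - 1)))
    (D : ℝ) (hD : 0 < D)
    (hgrad : ∀ n, 1 ≤ n → n ≤ N → ∀ s ∈ Set.Icc (0 : ℝ) 1,
      ‖gradient u ((1 - s) • w (n - 1) + s • w n)‖ ≤ D)
    (E : ℝ) (hE : 0 < E)
    (hseg : ∀ n, 1 ≤ n → n ≤ N → ‖w n - w (n - 1)‖ ≤ 2 * E / (D * T)) :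
    |(∫ t in (0 : ℝ)..T, u (q t)) - ∑ n ∈ Finset.Icc 1 N, τ n * u (w n)| ≤ E := by
  set S : ℕ → ℝ := fun n => ∑ m ∈ Finset.Icc 1 n, τ m with hS
  have hS0 : S 0 = 0 := by simp [hS]
  have hSsucc : ∀ i, S (i + 1) = S i + τ (i + 1) := fun i =>
    Finset.sum_Icc_succ_top (Nat.one_le_iff_ne_zero.mpr (Nat.succ_ne_zero i)) τ
  have hT0 : 0 < T := by
    rw [hT]
    exact Finset.sum_pos (fun n hn => hτ n (Finset.mem_Icc.mp hn).1 (Finset.mem_Icc.mp hn).2)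
      ⟨1, Finset.mem_Icc.mpr ⟨le_refl 1, hN⟩⟩
  have hqi : ∀ i < N, ∀ t ∈ Set.Icc (S i) (S (i + 1)),
      q t = w i + ((t - S i) / τ (i + 1)) • (w (i + 1) - w i) := by
    intro i hi t ht
    have := hq (i + 1) (Nat.le_add_left 1 i) hi t (by simpa [hS] using ht)
    simpa [hS] using this
  have hint : ∀ i, i < N → IntervalIntegrable (fun t => u (q t)) volume (S i) (S (i + 1)) := by
    intro i hi
    apply ContinuousOn.intervalIntegrable
    have hle : S i ≤ S (i + 1) := by
      rw [hSsucc i]; linarith [hτ (i + 1) (Nat.le_add_left 1 i) hi]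
    rw [Set.uIcc_of_le hle]
    exact seg_cont hu (w i) (w (i + 1)) (hqi i hi)
  have hsplit : (∫ t in (0 : ℝ)..T, u (q t)) =
      ∑ i ∈ Finset.range N, ∫ t in S i..S (i + 1), u (q t) := by
    rw [show (0 : ℝ) = S 0 from hS0.symm, show T = S N from hT,
      intervalIntegral.sum_integral_adjacent_intervals hint]
  have hsum : ∑ n ∈ Finset.Icc 1 N, τ n * u (w n) =
      ∑ i ∈ Finset.range N, τ (i + 1) * u (w (i + 1)) := by
    rw [show Finset.Icc 1 N = Finset.Ico 1 (N + 1) by rw [Finset.Ico_add_one_right_eq_Icc],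
      Finset.sum_Ico_eq_sum_range]
    simp only [Nat.add_sub_cancel]
    exact Finset.sum_congr rfl fun i _ => by rw [Nat.add_comm]
  have hper : ∀ i ∈ Finset.range N,
      |(∫ t in S i..S (i + 1), u (q t)) - τ (i + 1) * u (w (i + 1))| ≤ τ (i + 1) * (E / T) := by
    intro i hi
    rw [Finset.mem_range] at hi
    have hτi := hτ (i + 1) (Nat.le_add_left 1 i) hi
    have hgr : ∀ s ∈ Set.Icc (0:ℝ) 1,
        ‖gradient u ((1 - s) • w i + s • w (i + 1))‖ ≤ D := by
      intro s hs; simpa using hgrad (i + 1) (Nat.le_add_left 1 i) hi s hs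
    have h1 := seg_est hu (w i) (w (i + 1)) hτi (hSsucc i) (hqi i hi) hD.le hgr
    refine h1.trans ?_
    have h2 : ‖w (i + 1) - w i‖ ≤ 2 * E / (D * T) := by
      simpa using hseg (i + 1) (Nat.le_add_left 1 i) hi
    have h4 : D * ‖w (i + 1) - w i‖ * τ (i + 1) / 2 ≤
        D * (2 * E / (D * T)) * τ (i + 1) / 2 := by gcongr
    refine h4.trans (le_of_eq ?_)
    field_simp
  calc |(∫ t in (0 : ℝ)..T, u (q t)) - ∑ n ∈ Finset.Icc 1 N, τ n * u (w n)|
      = |∑ i ∈ Finset.range N,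
          ((∫ t in S i..S (i + 1), u (q t)) - τ (i + 1) * u (w (i + 1)))| := by
        rw [hsplit, hsum, Finset.sum_sub_distrib]
    _ ≤ ∑ i ∈ Finset.range N,
          |(∫ t in S i..S (i + 1), u (q t)) - τ (i + 1) * u (w (i + 1))| :=
        Finset.abs_sum_le_sum_abs _ _
    _ ≤ ∑ i ∈ Finset.range N, τ (i + 1) * (E / T) := Finset.sum_le_sum hper
    _ = (∑ i ∈ Finset.range N, τ (i + 1)) * (E / T) := by rw [Finset.sum_mul]
    _ = T * (E / T) := by
        congr 1
        rw [hT, show Finset.Icc 1 N = Finset.Ico 1 (N + 1) by rw [Finset.Ico_add_one_right_eq_Icc],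
          Finset.sum_Ico_eq_sum_range]
        simp only [Nat.add_sub_cancel]
        exact Finset.sum_congr rfl fun i _ => by rw [Nat.add_comm]
    _ = E := by field_simp
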